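/- arXiv:1404.1424 — 7 statements merged into one kernel-verified Lean document; each statement's English description precedes it below -/
import Mathlib

section
/- Let (V,E,c) be a connected electrical network with conductance function c. For every pair of vertices x, y ∈ V there exists a unique vector v_{xy} in the energy Hilbert space H_E such that ⟨v_{xy}, u⟩_{H_E} = u(x) − u(y) for all u ∈ H_E. -/
open scoped InnerProductSpace ComplexConjugate

/-- A connected electrical network: a countable locally finite connected graph
with a symmetric conductance function `c` that is positive on edges. -/
structure Network (V : Type*) where
  adj : V → V → Prop
  symm : ∀ x y, adj x y → adj y x
  loopless : ∀ x, ¬ adj x x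
  locFin : ∀ x, {y | adj x y}.Finite
  degPos : ∀ x, ∃ y, adj x y
  conn : ∀ x y, Relation.ReflTransGen (fun a b => adj a b) x y
  c : V → V → ℝ
  c_symm : ∀ x y, c x y = c y x
  c_pos : ∀ x y, adj x y → 0 < c x y

namespace Network

variable {V : Type*} (N : Network V)

attribute [local instance] Classical.propDecidable

/-- The (finite) set of neighbors of a vertex. -/
noncomputable def nbrs (x : V) : Finset V := (N.locFin x).toFinset

/-- The energy inner product `⟨u,v⟩ = (1/2) ΣΣ c_{xy} (ū(x)-ū(y))(v(x)-v(y))`. -/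
noncomputable def energyInner (u v : V → ℂ) : ℂ :=
  (1 / 2) * ∑' p : V × V,
    if N.adj p.1 p.2 then (N.c p.1 p.2 : ℂ) * (conj (u p.1 - u p.2)) * (v p.1 - v p.2) else 0

/-- The energy `‖u‖²_{H_E} = (1/2) ΣΣ c_{xy} |u(x)-u(y)|²`. -/
noncomputable def energy (u : V → ℂ) : ℝ :=
  (1 / 2) * ∑' p : V × V,
    if N.adj p.1 p.2 then N.c p.1 p.2 * ‖u p.1 - u p.2‖ ^ 2 else 0

/-- `u` has finite energy (the energy sum converges). -/
def energySummable (u : V → ℂ) : Prop :=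
  Summable (fun p : V × V => if N.adj p.1 p.2 then N.c p.1 p.2 * ‖u p.1 - u p.2‖ ^ 2 else 0)

/-- The graph Laplacian `(Δu)(x) = Σ_{y∼x} c_{xy} (u(x) - u(y))`. -/
noncomputable def lap (u : V → ℂ) (x : V) : ℂ :=
  ∑ y ∈ N.nbrs x, (N.c x y : ℂ) * (u x - u y)

/-- The total conductance `c(x) = Σ_{y∼x} c_{xy}` at a vertex. -/
noncomputable def cbar (x : V) : ℝ := ∑ y ∈ N.nbrs x, N.c x y

/-- The transition operator `(Pu)(x) = Σ_{y∼x} (c_{xy}/c(x)) u(y)`. -/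
noncomputable def trans (u : V → ℂ) (x : V) : ℂ :=
  ∑ y ∈ N.nbrs x, ((N.c x y / N.cbar x : ℝ) : ℂ) * u y

/-- The weighted `ℓ²(V, c̃)` inner product `Σ_x c̃(x) ū₁(x) u₂(x)`. -/
noncomputable def wInner (u₁ u₂ : V → ℂ) : ℂ :=
  ∑' x : V, (N.cbar x : ℂ) * (conj (u₁ x)) * u₂ x

end Network

/-- A realization of the energy Hilbert space `H_E` of a network: a complete complex
inner product space `H` whose elements represent functions on `V` (modulo constants,
via `rep`), whose inner product is the energy form, and which contains (a class of)
every finite-energy function on `V`. -/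
structure EnergySpace {V : Type*} (N : Network V) (H : Type*)
    [NormedAddCommGroup H] [InnerProductSpace ℂ H] [CompleteSpace H] where
  rep : H → V → ℂ
  inner_eq : ∀ f g : H, ⟪f, g⟫_ℂ = N.energyInner (rep f) (rep g)
  surj : ∀ u : V → ℂ, N.energySummable u →
    ∃ f : H, ∀ a b : V, rep f a - rep f b = u a - u b

attribute [local instance] Classical.propDecidable

section DipoleAux

variable {V : Type*} (N : Network V)

/-- The real energy family of a function. -/
noncomputable def Ffam (u : V → ℂ) : V × V → ℝ :=
  fun p => if N.adj p.1 p.2 then N.c p.1 p.2 * ‖u p.1 - u p.2‖ ^ 2 else 0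

/-- The complex pairing family of two functions. -/
noncomputable def Gfam (u v : V → ℂ) : V × V → ℂ :=
  fun p => if N.adj p.1 p.2 then
    (N.c p.1 p.2 : ℂ) * (conj (u p.1 - u p.2)) * (v p.1 - v p.2) else 0

lemma energyInner_eq_tsum (u v : V → ℂ) :
    N.energyInner u v = (1 / 2) * ∑' p, Gfam N u v p := rfl

lemma energySummable_iff (u : V → ℂ) :
    N.energySummable u ↔ Summable (Ffam N u) := Iff.rfl

lemma Ffam_nonneg (u : V → ℂ) (p : V × V) : 0 ≤ Ffam N u p := by
  unfold Ffam
  split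
  · have := N.c_pos p.1 p.2 (by assumption)
    positivity
  · exact le_refl _

lemma Gfam_self (u : V → ℂ) :
    Gfam N u u = fun p => ((Ffam N u p : ℝ) : ℂ) := by
  funext p
  unfold Gfam Ffam
  by_cases h : N.adj p.1 p.2
  · simp only [if_pos h]
    push_cast
    rw [mul_assoc, Complex.conj_mul']
  · simp only [if_neg h, Complex.ofReal_zero]

variable {H : Type*} [NormedAddCommGroup H] [InnerProductSpace ℂ H] [CompleteSpace H]
  (S : EnergySpace N H)

lemma inner_eq_tsum (f g : H) :
    ⟪f, g⟫_ℂ = (1 / 2) * ∑' p, Gfam N (S.rep f) (S.rep g) p := S.inner_eq f g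

lemma tsum_Gfam (f g : H) :
    ∑' p, Gfam N (S.rep f) (S.rep g) p = 2 * ⟪f, g⟫_ℂ := by
  rw [inner_eq_tsum N S f g]
  ring

/-- `rep 0` has constant differences. -/
lemma rep_zero_diff (a b : V) : S.rep 0 a - S.rep 0 b = 0 := by
  have hsum : N.energySummable (fun _ => (0 : ℂ)) := by
    rw [energySummable_iff]
    have : Ffam N (fun _ => (0 : ℂ)) = fun _ => 0 := by
      funext p
      unfold Ffam
      split <;> simp
    rw [this]
    exact summable_zero
  obtain ⟨f, hf⟩ := S.surj _ hsum
  have hdiff : ∀ a b : V, S.rep f a - S.rep f b = 0 := by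
    intro a b
    simpa using hf a b
  have hzero : f = 0 := by
    rw [← inner_self_eq_zero (𝕜 := ℂ), inner_eq_tsum N S]
    have : Gfam N (S.rep f) (S.rep f) = fun _ => 0 := by
      funext p
      unfold Gfam
      split
      · rw [hdiff]
        simp
      · rfl
    rw [this, tsum_zero, mul_zero]
  rw [← hzero]
  exact hdiff a b

/-- Every element of `H` is represented by a finite-energy function. -/
lemma summable_rep (f : H) : Summable (Ffam N (S.rep f)) := by
  by_cases hf : f = 0
  · subst hf
    have : Ffam N (S.rep 0) = fun _ => 0 := by
      funext p
      unfold Ffam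
      split
      · rw [rep_zero_diff N S]
        simp
      · rfl
    rw [this]
    exact summable_zero
  · by_contra h
    have h2 : ¬ Summable (fun p => ((Ffam N (S.rep f) p : ℝ) : ℂ)) := by
      rw [Complex.summable_ofReal]
      exact h
    apply hf
    rw [← inner_self_eq_zero (𝕜 := ℂ), inner_eq_tsum N S, Gfam_self N,
      tsum_eq_zero_of_not_summable h2, mul_zero]

/-- Pairings of finite-energy functions are summable. -/
lemma summable_Gfam {u v : V → ℂ} (hu : Summable (Ffam N u)) (hv : Summable (Ffam N v)) :
    Summable (Gfam N u v) := by
  refine Summable.of_norm_bounded (g := fun p => (1 / 2) * (Ffam N u p + Ffam N v p))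
    ((hu.add hv).mul_left _) ?_
  intro p
  unfold Gfam Ffam
  by_cases h : N.adj p.1 p.2
  · simp only [if_pos h]
    have hc := N.c_pos p.1 p.2 h
    rw [norm_mul, norm_mul, Complex.norm_real, RCLike.norm_conj, Real.norm_eq_abs,
      abs_of_pos hc]
    nlinarith [sq_nonneg (‖u p.1 - u p.2‖ - ‖v p.1 - v p.2‖), norm_nonneg (u p.1 - u p.2),
      norm_nonneg (v p.1 - v p.2)]
  · simp [if_neg h]

/-- `rep` is linear modulo constants. -/
lemma rep_linear (s t : ℂ) (f g : H) (a b : V) :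
    S.rep (s • f + t • g) a - S.rep (s • f + t • g) b
      = s * (S.rep f a - S.rep f b) + t * (S.rep g a - S.rep g b) := by
  classical
  let u := S.rep f
  let v := S.rep g
  let w := S.rep (s • f + t • g)
  let D : V → ℂ := fun z => s * u z + t * v z - w z
  have hpt : ∀ p, Gfam N D D p =
      (conj s * s) * Gfam N u u p + (conj s * t) * Gfam N u v p - conj s * Gfam N u w p
      + (conj t * s) * Gfam N v u p + (conj t * t) * Gfam N v v p - conj t * Gfam N v w p
      - s * Gfam N w u p - t * Gfam N w v p + Gfam N w w p := by
    intro p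
    unfold Gfam
    by_cases h : N.adj p.1 p.2
    · simp only [if_pos h, D, map_sub, map_add, map_mul]
      ring
    · simp [if_neg h]
  have hsf := summable_rep N S f
  have hsg := summable_rep N S g
  have hsh := summable_rep N S (s • f + t • g)
  have Huu : HasSum (Gfam N u u) (2 * ⟪f, f⟫_ℂ) :=
    tsum_Gfam N S f f ▸ (summable_Gfam N hsf hsf).hasSum
  have Huv : HasSum (Gfam N u v) (2 * ⟪f, g⟫_ℂ) :=
    tsum_Gfam N S f g ▸ (summable_Gfam N hsf hsg).hasSum
  have Huw : HasSum (Gfam N u w) (2 * ⟪f, s • f + t • g⟫_ℂ) :=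
    tsum_Gfam N S f _ ▸ (summable_Gfam N hsf hsh).hasSum
  have Hvu : HasSum (Gfam N v u) (2 * ⟪g, f⟫_ℂ) :=
    tsum_Gfam N S g f ▸ (summable_Gfam N hsg hsf).hasSum
  have Hvv : HasSum (Gfam N v v) (2 * ⟪g, g⟫_ℂ) :=
    tsum_Gfam N S g g ▸ (summable_Gfam N hsg hsg).hasSum
  have Hvw : HasSum (Gfam N v w) (2 * ⟪g, s • f + t • g⟫_ℂ) :=
    tsum_Gfam N S g _ ▸ (summable_Gfam N hsg hsh).hasSum
  have Hwu : HasSum (Gfam N w u) (2 * ⟪s • f + t • g, f⟫_ℂ) :=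
    tsum_Gfam N S _ f ▸ (summable_Gfam N hsh hsf).hasSum
  have Hwv : HasSum (Gfam N w v) (2 * ⟪s • f + t • g, g⟫_ℂ) :=
    tsum_Gfam N S _ g ▸ (summable_Gfam N hsh hsg).hasSum
  have Hww : HasSum (Gfam N w w) (2 * ⟪s • f + t • g, s • f + t • g⟫_ℂ) :=
    tsum_Gfam N S _ _ ▸ (summable_Gfam N hsh hsh).hasSum
  have HD' : HasSum (fun p =>
      (conj s * s) * Gfam N u u p + (conj s * t) * Gfam N u v p - conj s * Gfam N u w p
      + (conj t * s) * Gfam N v u p + (conj t * t) * Gfam N v v p - conj t * Gfam N v w p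
      - s * Gfam N w u p - t * Gfam N w v p + Gfam N w w p)
      ((conj s * s) * (2 * ⟪f, f⟫_ℂ) + (conj s * t) * (2 * ⟪f, g⟫_ℂ)
        - conj s * (2 * ⟪f, s • f + t • g⟫_ℂ)
      + (conj t * s) * (2 * ⟪g, f⟫_ℂ) + (conj t * t) * (2 * ⟪g, g⟫_ℂ)
        - conj t * (2 * ⟪g, s • f + t • g⟫_ℂ)
      - s * (2 * ⟪s • f + t • g, f⟫_ℂ) - t * (2 * ⟪s • f + t • g, g⟫_ℂ)
      + (2 * ⟪s • f + t • g, s • f + t • g⟫_ℂ)) :=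
    ((((((((Huu.mul_left _).add (Huv.mul_left _)).sub (Huw.mul_left _)).add
      (Hvu.mul_left _)).add (Hvv.mul_left _)).sub (Hvw.mul_left _)).sub
      (Hwu.mul_left _)).sub (Hwv.mul_left _)).add Hww
  have hE : ((conj s * s) * (2 * ⟪f, f⟫_ℂ) + (conj s * t) * (2 * ⟪f, g⟫_ℂ)
        - conj s * (2 * ⟪f, s • f + t • g⟫_ℂ)
      + (conj t * s) * (2 * ⟪g, f⟫_ℂ) + (conj t * t) * (2 * ⟪g, g⟫_ℂ)
        - conj t * (2 * ⟪g, s • f + t • g⟫_ℂ)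
      - s * (2 * ⟪s • f + t • g, f⟫_ℂ) - t * (2 * ⟪s • f + t • g, g⟫_ℂ)
      + (2 * ⟪s • f + t • g, s • f + t • g⟫_ℂ)) = 0 := by
    simp only [inner_add_left, inner_add_right, inner_smul_left, inner_smul_right]
    ring
  have HD : HasSum (Gfam N D D) 0 := by
    rw [funext hpt, ← hE]
    exact HD'
  -- the real energy family of `D` is summable with sum `0`, hence vanishes
  have hSD : Summable (fun p => ((Ffam N D p : ℝ) : ℂ)) := by
    rw [← Gfam_self N D]
    exact HD.summable
  have hFD : Summable (Ffam N D) := Complex.summable_ofReal.mp hSD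
  have hTF : ∑' p, Ffam N D p = 0 := by
    have h1 : ∑' p, Gfam N D D p = 0 := HD.tsum_eq
    rw [Gfam_self N D, ← Complex.ofReal_tsum] at h1
    exact_mod_cast h1
  have hterm : ∀ p, Ffam N D p = 0 := by
    intro p
    refine le_antisymm ?_ (Ffam_nonneg N D p)
    rw [← hTF]
    exact Summable.le_tsum hFD p (fun q _ => Ffam_nonneg N D q)
  have hadj : ∀ a b : V, N.adj a b → D a = D b := by
    intro a b h
    have h1 := hterm (a, b)
    unfold Ffam at h1
    rw [if_pos h] at h1
    have hc := N.c_pos a b h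
    have h2 : ‖D a - D b‖ ^ 2 = 0 := by
      by_contra h3
      have h4 : 0 < ‖D a - D b‖ ^ 2 := lt_of_le_of_ne (by positivity) (Ne.symm h3)
      nlinarith
    have h5 : D a - D b = 0 := by
      rw [pow_eq_zero_iff (by norm_num), norm_eq_zero] at h2
      exact h2
    exact sub_eq_zero.mp h5
  have hconst : D a = D b := by
    have key : ∀ {a b : V}, Relation.ReflTransGen (fun p q => N.adj p q) a b → D a = D b := by
      intro a b h
      induction h with
      | refl => rfl
      | tail _ h2 ih => exact ih.trans (hadj _ _ h2)
    exact key (N.conn a b)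
  have : s * u a + t * v a - w a = s * u b + t * v b - w b := hconst
  linear_combination -this

lemma tsum_Ffam (f : H) : ∑' p, Ffam N (S.rep f) p = 2 * ‖f‖ ^ 2 := by
  have h1 : ((∑' p, Ffam N (S.rep f) p : ℝ) : ℂ) = 2 * ⟪f, f⟫_ℂ := by
    rw [Complex.ofReal_tsum, ← Gfam_self, tsum_Gfam N S]
  rw [inner_self_eq_norm_sq_to_K] at h1
  have h2 : ((∑' p, Ffam N (S.rep f) p : ℝ) : ℂ) = ((2 * ‖f‖ ^ 2 : ℝ) : ℂ) := by
    rw [h1]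
    push_cast
    ring_nf
    rfl
  exact_mod_cast h2

lemma edge_bound {a b : V} (hab : N.adj a b) (f : H) :
    ‖S.rep f a - S.rep f b‖ ≤ Real.sqrt (2 / N.c a b) * ‖f‖ := by
  have hc := N.c_pos a b hab
  have hle : N.c a b * ‖S.rep f a - S.rep f b‖ ^ 2 ≤ 2 * ‖f‖ ^ 2 := by
    have h1 := Summable.le_tsum (summable_rep N S f) (a, b) (fun q _ => Ffam_nonneg N (S.rep f) q)
    rw [tsum_Ffam N S] at h1
    unfold Ffam at h1
    rwa [if_pos hab] at h1
  have h2 : ‖S.rep f a - S.rep f b‖ ^ 2 ≤ 2 / N.c a b * ‖f‖ ^ 2 := by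
    rw [div_mul_eq_mul_div, le_div_iff₀ hc]
    nlinarith
  calc ‖S.rep f a - S.rep f b‖ = Real.sqrt (‖S.rep f a - S.rep f b‖ ^ 2) :=
        (Real.sqrt_sq (norm_nonneg _)).symm
    _ ≤ Real.sqrt (2 / N.c a b * ‖f‖ ^ 2) := Real.sqrt_le_sqrt h2
    _ = Real.sqrt (2 / N.c a b) * ‖f‖ := by
        rw [Real.sqrt_mul (by positivity), Real.sqrt_sq (norm_nonneg _)]

lemma path_bound (x y : V) : ∃ K : ℝ, ∀ f : H, ‖S.rep f x - S.rep f y‖ ≤ K * ‖f‖ := by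
  have h := N.conn x y
  induction h with
  | refl => exact ⟨0, fun f => by simp⟩
  | @tail b c _ hbc ih =>
    obtain ⟨K, hK⟩ := ih
    refine ⟨K + Real.sqrt (2 / N.c b c), fun f => ?_⟩
    have h1 := hK f
    have h2 := edge_bound N S hbc f
    calc ‖S.rep f x - S.rep f c‖
        ≤ ‖S.rep f x - S.rep f b‖ + ‖S.rep f b - S.rep f c‖ := by
          have := norm_add_le (S.rep f x - S.rep f b) (S.rep f b - S.rep f c)
          simpa using this
      _ ≤ K * ‖f‖ + Real.sqrt (2 / N.c b c) * ‖f‖ := add_le_add h1 h2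
      _ = (K + Real.sqrt (2 / N.c b c)) * ‖f‖ := by ring

end DipoleAux

/-- In a connected network, for every pair of vertices `x, y` there is a
unique dipole vector `v_{xy}` in the energy Hilbert space with
`⟨v_{xy}, u⟩ = u(x) - u(y)` for all `u ∈ H_E`. -/
theorem dipole_exists_unique
    {V : Type*} [Countable V] (N : Network V)
    {H : Type*} [NormedAddCommGroup H] [InnerProductSpace ℂ H] [CompleteSpace H]
    (S : EnergySpace N H) (x y : V) :
    ∃! v : H, ∀ u : H, ⟪v, u⟫_ℂ = S.rep u x - S.rep u y := by
  obtain ⟨K, hK⟩ := path_bound N S x y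
  let φ : H →ₗ[ℂ] ℂ :=
    { toFun := fun f => S.rep f x - S.rep f y
      map_add' := fun f g => by
        have h := rep_linear N S 1 1 f g x y
        simpa [one_smul] using h
      map_smul' := fun s f => by
        have h := rep_linear N S s 0 f 0 x y
        simpa [zero_smul, add_zero, zero_mul] using h }
  let φc : H →L[ℂ] ℂ := LinearMap.mkContinuous φ K (fun f => hK f)
  refine ⟨(InnerProductSpace.toDual ℂ H).symm φc, fun u => ?_, fun v hv => ?_⟩
  · rw [InnerProductSpace.toDual_symm_apply]
    rfl
  · have h0 : ∀ u : H, ⟪v - (InnerProductSpace.toDual ℂ H).symm φc, u⟫_ℂ = 0 := by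
      intro u
      rw [inner_sub_left, hv u, InnerProductSpace.toDual_symm_apply]
      show S.rep u x - S.rep u y - φc u = 0
      show S.rep u x - S.rep u y - (S.rep u x - S.rep u y) = 0
      ring
    have h1 := h0 (v - (InnerProductSpace.toDual ℂ H).symm φc)
    rw [inner_self_eq_zero] at h1
    exact sub_eq_zero.mp h1
end

section
/- Every u in the energy Hilbert space has the norm-convergent expansion u = Σ_{(xy)∈E^{ori}} I(u)_{xy} · v_{xy}, where I(u)_{xy} := c_{xy}(u(x) − u(y)) is the current through the edge (x,y). -/
open scoped InnerProductSpace ComplexConjugate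

namespace Network

variable {V : Type*} (N : Network V)

attribute [local instance] Classical.propDecidable

end Network

attribute [local instance] Classical.propDecidable

/-- Every `u ∈ H_E` has the norm-convergent current expansion
`u = Σ_{(xy)∈E^{ori}} I(u)_{xy} v_{xy}` with `I(u)_{xy} = c_{xy}(u(x) - u(y))`. -/
theorem current_expansion
    {V : Type*} [Countable V] (N : Network V)
    (ori : Set (V × V))
    (hcover : ∀ p : V × V, N.adj p.1 p.2 ↔ (p ∈ ori ∨ p.swap ∈ ori))
    (honce : ∀ p : V × V, p ∈ ori → p.swap ∉ ori)
    {H : Type*} [NormedAddCommGroup H] [InnerProductSpace ℂ H] [CompleteSpace H]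
    (rep : H → V → ℂ)
    (hnorm : ∀ f : H, ‖f‖ ^ 2 =
      ∑' e : ori, N.c (e : V × V).1 (e : V × V).2 *
        ‖rep f (e : V × V).1 - rep f (e : V × V).2‖ ^ 2)
    (v : ori → H)
    (hv : ∀ e : ori, ∀ u : H,
      ⟪v e, u⟫_ℂ = rep u (e : V × V).1 - rep u (e : V × V).2)
 :
    ∀ u : H, HasSum
      (fun e : ori =>
        ((N.c (e : V × V).1 (e : V × V).2 : ℂ) *
          (rep u (e : V × V).1 - rep u (e : V × V).2)) • v e) u := by
  classical
  -- abbreviations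
  set cc : ori → ℝ := fun e => N.c (e : V × V).1 (e : V × V).2 with hcc
  have hccpos : ∀ e : ori, 0 < cc e := by
    intro e
    exact N.c_pos _ _ ((hcover (e : V × V)).2 (Or.inl e.2))
  -- rewrite the norm identity via the dipole vectors
  have hnorm' : ∀ f : H, ‖f‖ ^ 2 = ∑' e : ori, cc e * ‖⟪v e, f⟫_ℂ‖ ^ 2 := by
    intro f
    rw [hnorm f]
    exact tsum_congr fun e => by rw [hv]
  have hsummable : ∀ f : H, Summable (fun e : ori => cc e * ‖⟪v e, f⟫_ℂ‖ ^ 2) := by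
    intro f
    by_cases hf : f = 0
    · simp only [hf, inner_zero_right, norm_zero]
      simpa using summable_zero
    · by_contra hns
      have h0 := tsum_eq_zero_of_not_summable hns
      have : ‖f‖ ^ 2 = 0 := by rw [hnorm' f, h0]
      exact hf (norm_eq_zero.1 (by nlinarith [norm_nonneg f]))
  -- the key bound on finite partial sums (Bessel-type, via Cauchy-Schwarz)
  have hb : ∀ (f : H) (F : Finset ori),
      ‖∑ e ∈ F, ((cc e : ℂ) * ⟪v e, f⟫_ℂ) • v e‖ ^ 2
        ≤ ∑ e ∈ F, cc e * ‖⟪v e, f⟫_ℂ‖ ^ 2 := by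
    intro f F
    set S : H := ∑ e ∈ F, ((cc e : ℂ) * ⟪v e, f⟫_ℂ) • v e with hSdef
    set M : ℝ := ∑ e ∈ F, cc e * ‖⟪v e, f⟫_ℂ‖ ^ 2 with hMdef
    have hM0 : 0 ≤ M := Finset.sum_nonneg fun e _ => mul_nonneg (hccpos e).le (by positivity)
    have hstep : ‖S‖ ^ 2 ≤ Real.sqrt M * ‖S‖ := by
      have h1 : (‖S‖ ^ 2 : ℝ) = Complex.re ⟪S, S⟫_ℂ := by
        rw [inner_self_eq_norm_sq_to_K (𝕜 := ℂ) S]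
        simp [← Complex.ofReal_pow]
      have h2 : ⟪S, S⟫_ℂ = ∑ e ∈ F, (starRingEnd ℂ) ((cc e : ℂ) * ⟪v e, f⟫_ℂ) * ⟪v e, S⟫_ℂ := by
        rw [hSdef, sum_inner]
        exact Finset.sum_congr rfl fun e _ => by rw [inner_smul_left]
      have h3 : Complex.re ⟪S, S⟫_ℂ ≤ ‖⟪S, S⟫_ℂ‖ := Complex.re_le_norm _
      have h4 : ‖⟪S, S⟫_ℂ‖ ≤ ∑ e ∈ F,
          Real.sqrt (cc e * ‖⟪v e, f⟫_ℂ‖ ^ 2) * Real.sqrt (cc e * ‖⟪v e, S⟫_ℂ‖ ^ 2) := by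
        rw [h2]
        refine (norm_sum_le _ _).trans (Finset.sum_le_sum fun e _ => ?_)
        have hccnn : (0:ℝ) ≤ cc e := (hccpos e).le
        have : ‖(starRingEnd ℂ) ((cc e : ℂ) * ⟪v e, f⟫_ℂ) * ⟪v e, S⟫_ℂ‖
            = cc e * ‖⟪v e, f⟫_ℂ‖ * ‖⟪v e, S⟫_ℂ‖ := by
          rw [norm_mul, RCLike.norm_conj, norm_mul, Complex.norm_real, Real.norm_eq_abs,
            abs_of_nonneg hccnn]
        rw [this, Real.sqrt_mul hccnn, Real.sqrt_mul hccnn,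
          Real.sqrt_sq (norm_nonneg _), Real.sqrt_sq (norm_nonneg _)]
        have hsq : Real.sqrt (cc e) * Real.sqrt (cc e) = cc e := Real.mul_self_sqrt hccnn
        have hkey : (Real.sqrt (cc e) * ‖⟪v e, f⟫_ℂ‖) * (Real.sqrt (cc e) * ‖⟪v e, S⟫_ℂ‖)
            = cc e * ‖⟪v e, f⟫_ℂ‖ * ‖⟪v e, S⟫_ℂ‖ := by
          rw [mul_mul_mul_comm, hsq, mul_assoc]
        exact le_of_eq hkey.symm
      have h5 : ∑ e ∈ F, Real.sqrt (cc e * ‖⟪v e, f⟫_ℂ‖ ^ 2)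
            * Real.sqrt (cc e * ‖⟪v e, S⟫_ℂ‖ ^ 2)
          ≤ Real.sqrt M * Real.sqrt (∑ e ∈ F, cc e * ‖⟪v e, S⟫_ℂ‖ ^ 2) :=
        Real.sum_sqrt_mul_sqrt_le F (fun e => mul_nonneg (hccpos e).le (by positivity))
          (fun e => mul_nonneg (hccpos e).le (by positivity))
      have h6 : ∑ e ∈ F, cc e * ‖⟪v e, S⟫_ℂ‖ ^ 2 ≤ ‖S‖ ^ 2 := by
        rw [hnorm' S]
        exact Summable.sum_le_tsum F (fun e _ => mul_nonneg (hccpos e).le (by positivity)) (hsummable S)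
      have h7 : Real.sqrt (∑ e ∈ F, cc e * ‖⟪v e, S⟫_ℂ‖ ^ 2) ≤ ‖S‖ := by
        refine (Real.sqrt_le_sqrt h6).trans ?_
        rw [Real.sqrt_sq (norm_nonneg _)]
      calc ‖S‖ ^ 2 = Complex.re ⟪S, S⟫_ℂ := h1
        _ ≤ ‖⟪S, S⟫_ℂ‖ := h3
        _ ≤ _ := h4
        _ ≤ Real.sqrt M * Real.sqrt (∑ e ∈ F, cc e * ‖⟪v e, S⟫_ℂ‖ ^ 2) := h5
        _ ≤ Real.sqrt M * ‖S‖ :=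
            mul_le_mul_of_nonneg_left h7 (Real.sqrt_nonneg M)
    -- conclude ‖S‖^2 ≤ M
    rcases eq_or_lt_of_le (norm_nonneg S) with h | h
    · rw [← h]; simpa using hM0
    · have hle : ‖S‖ ≤ Real.sqrt M := by
        have := hstep
        nlinarith
      have := mul_self_le_mul_self (norm_nonneg S) hle
      nlinarith [Real.sq_sqrt hM0]
  -- summability of the vector series
  have hvs : ∀ f : H, Summable (fun e : ori => ((cc e : ℂ) * ⟪v e, f⟫_ℂ) • v e) := by
    intro f
    rw [summable_iff_vanishing_norm]
    intro ε hε
    obtain ⟨s, hs⟩ := summable_iff_vanishing_norm.1 (hsummable f) (ε ^ 2) (by positivity)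
    refine ⟨s, fun t ht => ?_⟩
    have h1 := hb f t
    have h2 := hs t ht
    have h3 : ∑ e ∈ t, cc e * ‖⟪v e, f⟫_ℂ‖ ^ 2 < ε ^ 2 := by
      have hnn : 0 ≤ ∑ e ∈ t, cc e * ‖⟪v e, f⟫_ℂ‖ ^ 2 :=
        Finset.sum_nonneg fun e _ => mul_nonneg (hccpos e).le (by positivity)
      rwa [Real.norm_eq_abs, abs_of_nonneg hnn] at h2
    have := lt_of_le_of_lt h1 h3
    nlinarith [norm_nonneg (∑ e ∈ t, ((cc e : ℂ) * ⟪v e, f⟫_ℂ) • v e)]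
  -- the reconstruction operator minus the identity
  set T : H →ₗ[ℂ] H :=
    { toFun := fun f => (∑' e : ori, ((cc e : ℂ) * ⟪v e, f⟫_ℂ) • v e) - f
      map_add' := by
        intro f g
        have : (fun e : ori => ((cc e : ℂ) * ⟪v e, f + g⟫_ℂ) • v e)
            = fun e => ((cc e : ℂ) * ⟪v e, f⟫_ℂ) • v e + ((cc e : ℂ) * ⟪v e, g⟫_ℂ) • v e := by
          funext e
          rw [inner_add_right, mul_add, add_smul]
        rw [this, Summable.tsum_add (hvs f) (hvs g)]
        abel
      map_smul' := by
        intro a f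
        have : (fun e : ori => ((cc e : ℂ) * ⟪v e, a • f⟫_ℂ) • v e)
            = fun e => a • (((cc e : ℂ) * ⟪v e, f⟫_ℂ) • v e) := by
          funext e
          rw [inner_smul_right, smul_smul]
          ring_nf
        rw [this, Summable.tsum_const_smul a (hvs f)]
        simp [smul_sub] } with hT
  have hTzero : ∀ f : H, ⟪T f, f⟫_ℂ = 0 := by
    intro f
    have hmap : HasSum (fun e : ori => ⟪f, ((cc e : ℂ) * ⟪v e, f⟫_ℂ) • v e⟫_ℂ)
        ⟪f, ∑' e : ori, ((cc e : ℂ) * ⟪v e, f⟫_ℂ) • v e⟫_ℂ :=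
      (hvs f).hasSum.mapL (innerSL ℂ f)
    have hterm : (fun e : ori => ⟪f, ((cc e : ℂ) * ⟪v e, f⟫_ℂ) • v e⟫_ℂ)
        = fun e : ori => ((cc e * ‖⟪v e, f⟫_ℂ‖ ^ 2 : ℝ) : ℂ) := by
      funext e
      rw [inner_smul_right]
      have h1 : ⟪f, v e⟫_ℂ = (starRingEnd ℂ) ⟪v e, f⟫_ℂ := (inner_conj_symm _ _).symm
      rw [h1]
      have h2 : ⟪v e, f⟫_ℂ * (starRingEnd ℂ) ⟪v e, f⟫_ℂ = ((‖⟪v e, f⟫_ℂ‖ ^ 2 : ℝ) : ℂ) := by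
        rw [RCLike.mul_conj]
        simp
      push_cast
      rw [mul_assoc, h2]
      push_cast
      ring
    rw [hterm] at hmap
    have hreal : HasSum (fun e : ori => ((cc e * ‖⟪v e, f⟫_ℂ‖ ^ 2 : ℝ) : ℂ)) ((‖f‖ ^ 2 : ℝ) : ℂ) := by
      have := ((hsummable f).hasSum_iff).2 (hnorm' f).symm
      exact this.mapL Complex.ofRealCLM
    have hval : ⟪f, ∑' e : ori, ((cc e : ℂ) * ⟪v e, f⟫_ℂ) • v e⟫_ℂ = ((‖f‖ ^ 2 : ℝ) : ℂ) :=
      hmap.unique hreal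
    have : ⟪f, T f⟫_ℂ = 0 := by
      show ⟪f, (∑' e : ori, ((cc e : ℂ) * ⟪v e, f⟫_ℂ) • v e) - f⟫_ℂ = 0
      rw [inner_sub_right, hval, inner_self_eq_norm_sq_to_K]
      push_cast
      exact sub_self _
    calc ⟪T f, f⟫_ℂ = (starRingEnd ℂ) ⟪f, T f⟫_ℂ := (inner_conj_symm _ _).symm
      _ = 0 := by rw [this]; simp
  have hTeq : T = 0 := (inner_map_self_eq_zero T).1 hTzero
  intro u
  have hfix : (∑' e : ori, ((cc e : ℂ) * ⟪v e, u⟫_ℂ) • v e) = u := by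
    have := congrFun (congrArg (fun (L : H →ₗ[ℂ] H) => (L : H → H)) hTeq) u
    simp only [hT, LinearMap.coe_mk, AddHom.coe_mk, LinearMap.zero_apply] at this
    exact sub_eq_zero.1 this
  have hgoal : (fun e : ori =>
      ((N.c (e : V × V).1 (e : V × V).2 : ℂ) *
        (rep u (e : V × V).1 - rep u (e : V × V).2)) • v e)
      = fun e : ori => ((cc e : ℂ) * ⟪v e, u⟫_ℂ) • v e := by
    funext e
    rw [hv e u]
  rw [hgoal]
  have hfin := (hvs u).hasSum
  rwa [hfix] at hfin
end

section
/- Let dist_c(x,y) := sup{ 1/‖u‖²_{H_E} : u ∈ H_E, u(x) = 1, u(y) = 0 } be the resistance metric on a connected network. Then dist_c(x,y) = ‖v_{xy}‖²_{H_E}, where v_{xy} is the dipole vector satisfying ⟨v_{xy},u⟩_{H_E} = u(x)−u(y). -/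
open scoped InnerProductSpace ComplexConjugate

namespace Network

variable {V : Type*} (N : Network V)

attribute [local instance] Classical.propDecidable

end Network

attribute [local instance] Classical.propDecidable

/-- The resistance metric
`dist_c(x,y) = sup{ 1/‖u‖² : u ∈ H_E, u(x) = 1, u(y) = 0 }` equals `‖v_{xy}‖²_{H_E}`,
the squared energy norm of the dipole. -/
theorem resistance_metric_eq_dipole_norm_sq
    {V : Type*} [Countable V] (N : Network V)
    {H : Type*} [NormedAddCommGroup H] [InnerProductSpace ℂ H] [CompleteSpace H]
    (S : EnergySpace N H) (x y : V) (v : H)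
    (hv : ∀ u : H, ⟪v, u⟫_ℂ = S.rep u x - S.rep u y) :
    sSup {r : ℝ | ∃ u : H, S.rep u x - S.rep u y = 1 ∧ r = 1 / ‖u‖ ^ 2} = ‖v‖ ^ 2 := by
  by_cases hv0 : v = 0
  · have hempty : {r : ℝ | ∃ u : H, S.rep u x - S.rep u y = 1 ∧ r = 1 / ‖u‖ ^ 2} = ∅ := by
      ext r
      simp only [Set.mem_setOf_eq, Set.mem_empty_iff_false, iff_false, not_exists]
      rintro u ⟨h1, -⟩
      have := hv u
      rw [hv0] at this
      simp [h1] at this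
    rw [hempty, Real.sSup_empty, hv0]
    simp
  · have hvpos : (0:ℝ) < ‖v‖ := norm_pos_iff.mpr hv0
    have hub : ∀ r ∈ {r : ℝ | ∃ u : H, S.rep u x - S.rep u y = 1 ∧ r = 1 / ‖u‖ ^ 2},
        r ≤ ‖v‖ ^ 2 := by
      rintro r ⟨u, h1, rfl⟩
      have hinner : ⟪v, u⟫_ℂ = 1 := by rw [hv u, h1]
      have hcs : ‖⟪v, u⟫_ℂ‖ ≤ ‖v‖ * ‖u‖ := norm_inner_le_norm v u
      rw [hinner, norm_one] at hcs
      have hu0 : (0:ℝ) < ‖u‖ := by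
        by_contra h
        push_neg at h
        nlinarith
      rw [div_le_iff₀ (by positivity)]
      nlinarith
    have hmem : ‖v‖ ^ 2 ∈ {r : ℝ | ∃ u : H, S.rep u x - S.rep u y = 1 ∧ r = 1 / ‖u‖ ^ 2} := by
      refine ⟨((‖v‖ ^ 2 : ℝ)⁻¹ : ℂ) • v, ?_, ?_⟩
      · have := hv (((‖v‖ ^ 2 : ℝ)⁻¹ : ℂ) • v)
        rw [inner_smul_right] at this
        rw [← this, inner_self_eq_norm_sq_to_K]
        push_cast
        exact inv_mul_cancel₀ (pow_ne_zero 2 (Complex.ofReal_ne_zero.mpr hvpos.ne'))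
      · rw [norm_smul, norm_inv, Complex.norm_real, Real.norm_eq_abs,
          abs_of_nonneg (by positivity)]
        field_simp
    exact le_antisymm (Real.sSup_le hub (by positivity)) (le_csSup ⟨‖v‖ ^ 2, hub⟩ hmem)
end

section
/- The orthogonal complement in the energy Hilbert space of the family {δ_x : x ∈ V} equals the space of harmonic functions: {u ∈ H_E : ⟨δ_x, u⟩_{H_E} = 0 for all x ∈ V} = {u ∈ H_E : Δu = 0}. -/
open scoped InnerProductSpace ComplexConjugate

namespace Network

variable {V : Type*} (N : Network V)

attribute [local instance] Classical.propDecidable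

end Network

attribute [local instance] Classical.propDecidable

lemma inner_delta_eq_lap
    {V : Type*} [Countable V] (N : Network V)
    {H : Type*} [NormedAddCommGroup H] [InnerProductSpace ℂ H] [CompleteSpace H]
    (S : EnergySpace N H) (d : V → H)
    (hd : ∀ x : V, ∀ a b : V, S.rep (d x) a - S.rep (d x) b =
      (if a = x then (1 : ℂ) else 0) - (if b = x then (1 : ℂ) else 0))
    (u : H) (x : V) : ⟪d x, u⟫_ℂ = N.lap (S.rep u) x := by
  rw [S.inner_eq, Network.energyInner]
  set f : V × V → ℂ := fun p =>
    if N.adj p.1 p.2 then (N.c p.1 p.2 : ℂ) *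
      (conj (S.rep (d x) p.1 - S.rep (d x) p.2)) * (S.rep u p.1 - S.rep u p.2) else 0
    with hf
  have hmem : ∀ y, y ∈ N.nbrs x ↔ N.adj x y := by
    intro y; simp [Network.nbrs, Set.Finite.mem_toFinset]
  set s : Finset (V × V) :=
    (N.nbrs x).image (fun y => ((x, y) : V × V)) ∪
      (N.nbrs x).image (fun y => ((y, x) : V × V)) with hs
  have hzero : ∀ p ∉ s, f p = 0 := by
    intro p hp
    by_cases hadj : N.adj p.1 p.2
    · have h1 : p.1 ≠ x := by
        rintro rfl
        exact hp (Finset.mem_union_left _ (Finset.mem_image.2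
          ⟨p.2, (hmem p.2).2 hadj, rfl⟩))
      have h2 : p.2 ≠ x := by
        rintro rfl
        exact hp (Finset.mem_union_right _ (Finset.mem_image.2
          ⟨p.1, (hmem p.1).2 (N.symm _ _ hadj), rfl⟩))
      have hrep : S.rep (d x) p.1 - S.rep (d x) p.2 = 0 := by
        rw [hd x p.1 p.2, if_neg h1, if_neg h2, sub_zero]
      simp only [hf]; rw [if_pos hadj, hrep, map_zero, mul_zero, zero_mul]
    · simp [hf, hadj]
  rw [tsum_eq_sum hzero]
  have hdisj : Disjoint ((N.nbrs x).image (fun y => ((x, y) : V × V)))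
      ((N.nbrs x).image (fun y => ((y, x) : V × V))) := by
    rw [Finset.disjoint_left]
    rintro p hp1 hp2
    obtain ⟨a, ha, rfl⟩ := Finset.mem_image.1 hp1
    obtain ⟨b, hb, hba⟩ := Finset.mem_image.1 hp2
    have hbx : b = x := (Prod.mk.inj hba).1
    rw [hbx] at hb
    exact N.loopless x ((hmem x).1 hb)
  rw [hs, Finset.sum_union hdisj,
    Finset.sum_image (by intro a _ b _ h; exact (Prod.mk.inj h).2),
    Finset.sum_image (by intro a _ b _ h; exact (Prod.mk.inj h).1)]
  have hxne : ∀ y ∈ N.nbrs x, y ≠ x := by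
    intro y hy hyx; rw [hyx] at hy; exact N.loopless x ((hmem x).1 hy)
  have e1 : ∀ y ∈ N.nbrs x, f (x, y) = (N.c x y : ℂ) * (S.rep u x - S.rep u y) := by
    intro y hy
    have hadj : N.adj x y := (hmem y).1 hy
    have hrep : S.rep (d x) x - S.rep (d x) y = 1 := by
      rw [hd x x y, if_pos rfl, if_neg (hxne y hy), sub_zero]
    simp only [hf]; rw [if_pos hadj, hrep, map_one, mul_one]
  have e2 : ∀ y ∈ N.nbrs x, f (y, x) = (N.c x y : ℂ) * (S.rep u x - S.rep u y) := by
    intro y hy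
    have hadj : N.adj y x := N.symm _ _ ((hmem y).1 hy)
    have hrep : S.rep (d x) y - S.rep (d x) x = -1 := by
      rw [hd x y x, if_neg (hxne y hy), if_pos rfl, zero_sub]
    simp only [hf, if_pos hadj, hrep, map_neg, map_one, N.c_symm y x]
    ring
  rw [Finset.sum_congr rfl e1, Finset.sum_congr rfl e2, Network.lap]
  ring

/-- The orthogonal complement in `H_E` of the family
`{δ_x : x ∈ V}` is the space of harmonic functions:
`{u : ⟨δ_x, u⟩ = 0 ∀x} = {u : Δu = 0}`. -/
theorem delta_orthocomplement_eq_harmonic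
    {V : Type*} [Countable V] (N : Network V)
    {H : Type*} [NormedAddCommGroup H] [InnerProductSpace ℂ H] [CompleteSpace H]
    (S : EnergySpace N H) (d : V → H)
    (hd : ∀ x : V, ∀ a b : V, S.rep (d x) a - S.rep (d x) b =
      (if a = x then (1 : ℂ) else 0) - (if b = x then (1 : ℂ) else 0)) :
    {u : H | ∀ x : V, ⟪d x, u⟫_ℂ = 0} =
      {u : H | ∀ z : V, N.lap (S.rep u) z = 0} := by
  ext u
  simp only [Set.mem_setOf_eq]
  constructor
  · intro h z; rw [← inner_delta_eq_lap N S d hd u z]; exact h z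
  · intro h x; rw [inner_delta_eq_lap N S d hd u x]; exact h x
end

section
/- For every vertex x ∈ V, the identity Σ_{y∼x} c_{xy} v_{xy} = δ_x holds in the energy Hilbert space, where v_{xy} are dipole vectors and the sum is over the (finitely many) neighbors of x. -/
open scoped InnerProductSpace ComplexConjugate

namespace Network

variable {V : Type*} (N : Network V)

attribute [local instance] Classical.propDecidable

end Network

attribute [local instance] Classical.propDecidable

/-- For every vertex `x`, `Σ_{y∼x} c_{xy} v_{xy} = δ_x` in the
energy Hilbert space. -/
theorem sum_conductance_dipoles_eq_delta
    {V : Type*} [Countable V] (N : Network V)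
    {H : Type*} [NormedAddCommGroup H] [InnerProductSpace ℂ H] [CompleteSpace H]
    (S : EnergySpace N H) (x : V)
    (v : V → H)
    (hv : ∀ y : V, ∀ u : H, ⟪v y, u⟫_ℂ = S.rep u x - S.rep u y)
    (dx : H)
    (hdx : ∀ a b : V, S.rep dx a - S.rep dx b =
      (if a = x then (1 : ℂ) else 0) - (if b = x then (1 : ℂ) else 0)) :
    ∑ y ∈ N.nbrs x, (N.c x y : ℂ) • v y = dx := by
  apply ext_inner_right ℂ
  intro u
  rw [sum_inner, S.inner_eq]
  simp only [inner_smul_left, hv, Complex.conj_ofReal]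
  set g := S.rep u with hg
  set w := S.rep dx with hw
  have hconj : ∀ a b : V, (starRingEnd ℂ) (w a - w b) =
      (if a = x then (1:ℂ) else 0) - (if b = x then (1:ℂ) else 0) := by
    intro a b
    rw [hdx a b]
    simp [apply_ite (starRingEnd ℂ)]
  unfold Network.energyInner
  have hmem : ∀ y, y ∈ N.nbrs x ↔ N.adj x y := fun y => (N.locFin x).mem_toFinset
  set s : Finset (V × V) := ({x} ×ˢ N.nbrs x) ∪ (N.nbrs x ×ˢ {x}) with hs
  have hzero : ∀ p : V × V, p ∉ s →
      (if N.adj p.1 p.2 then (N.c p.1 p.2 : ℂ) * (starRingEnd ℂ) (w p.1 - w p.2)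
        * (g p.1 - g p.2) else 0) = 0 := by
    intro p hp
    by_cases h : N.adj p.1 p.2
    · rw [if_pos h, hconj]
      have h1 : p.1 ≠ x := by
        intro h1
        apply hp
        simp only [hs, Finset.mem_union, Finset.mem_product, Finset.mem_singleton, hmem]
        exact Or.inl ⟨h1, h1 ▸ h⟩
      have h2 : p.2 ≠ x := by
        intro h2
        apply hp
        simp only [hs, Finset.mem_union, Finset.mem_product, Finset.mem_singleton, hmem]
        exact Or.inr ⟨N.symm _ _ (h2 ▸ h), h2⟩
      rw [if_neg h1, if_neg h2]
      ring
    · rw [if_neg h]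
  rw [tsum_eq_sum hzero]
  have hdisj : Disjoint ({x} ×ˢ N.nbrs x) (N.nbrs x ×ˢ {x}) := by
    rw [Finset.disjoint_left]
    rintro ⟨a, b⟩ ha hb
    simp only [Finset.mem_product, Finset.mem_singleton, hmem] at ha hb
    exact N.loopless x (ha.1 ▸ hb.1)
  rw [hs, Finset.sum_union hdisj, Finset.sum_product, Finset.sum_product,
    Finset.sum_singleton]
  have e1 : ∀ y ∈ N.nbrs x, (if N.adj x y then (N.c x y : ℂ) * (starRingEnd ℂ) (w x - w y)
      * (g x - g y) else 0) = (N.c x y : ℂ) * (g x - g y) := by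
    intro y hy
    rw [hmem] at hy
    have hyx : y ≠ x := fun hyx => N.loopless x (hyx ▸ hy)
    rw [if_pos hy, hconj, if_pos rfl, if_neg hyx]
    ring
  have e2 : ∀ y ∈ N.nbrs x, (∑ b ∈ {x}, if N.adj y b then (N.c y b : ℂ)
      * (starRingEnd ℂ) (w y - w b) * (g y - g b) else 0) = (N.c x y : ℂ) * (g x - g y) := by
    intro y hy
    rw [hmem] at hy
    have hyx : y ≠ x := fun hyx => N.loopless x (hyx ▸ hy)
    rw [Finset.sum_singleton, if_pos (N.symm _ _ hy), hconj, if_neg hyx, if_pos rfl,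
      N.c_symm y x]
    ring
  rw [Finset.sum_congr rfl e1, Finset.sum_congr rfl e2, ← Finset.sum_add_distrib]
  rw [Finset.mul_sum]
  apply Finset.sum_congr rfl
  intro y _
  ring
end

section
/- Let φ = Σ_{x∈V'} ξ_x v_x be a finite linear combination of dipoles with coefficients satisfying Σ_x ξ_x = 0. Then the quadratic form of the graph Laplacian satisfies ⟨φ, Δφ⟩_{H_E} = Σ_{x∈V'} |ξ_x|². -/
open scoped InnerProductSpace ComplexConjugate

namespace Network

variable {V : Type*} (N : Network V)

attribute [local instance] Classical.propDecidable

end Network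

attribute [local instance] Classical.propDecidable

/-- For `φ = Σ_{x∈V'} ξ_x v_x` with `Σ ξ_x = 0`, the quadratic form
of the Laplacian satisfies `⟨φ, Δφ⟩_{H_E} = Σ |ξ_x|²`, where `Δ v_x = δ_x - δ_o`. -/
theorem laplacian_quadratic_form_on_dipoles
    {V : Type*} [Countable V] (N : Network V)
    {H : Type*} [NormedAddCommGroup H] [InnerProductSpace ℂ H] [CompleteSpace H]
    (S : EnergySpace N H) (o : V) (v d : V → H)
    (hv : ∀ x : V, ∀ u : H, ⟪v x, u⟫_ℂ = S.rep u x - S.rep u o)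
    (hd : ∀ z : V, ∀ a b : V, S.rep (d z) a - S.rep (d z) b =
      (if a = z then (1 : ℂ) else 0) - (if b = z then (1 : ℂ) else 0))
    (s : Finset V) (hs : ∀ x ∈ s, x ≠ o)
    (ξ : V → ℂ) (hξ : ∑ x ∈ s, ξ x = 0) :
    ⟪∑ x ∈ s, ξ x • v x, ∑ x ∈ s, ξ x • (d x - d o)⟫_ℂ =
      ∑ x ∈ s, (‖ξ x‖ ^ 2 : ℂ) := by
  have key : ∀ x ∈ s, ∀ y ∈ s, ⟪v y, d x - d o⟫_ℂ = (if y = x then (1:ℂ) else 0) + 1 := by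
    intro x hx y hy
    rw [inner_sub_right, hv, hv]
    have h1 := hd x y o
    have h2 := hd o y o
    rw [h1, h2]
    have hxo : x ≠ o := hs x hx
    have hyo : y ≠ o := hs y hy
    simp [hxo.symm, hyo]
  calc ⟪∑ x ∈ s, ξ x • v x, ∑ x ∈ s, ξ x • (d x - d o)⟫_ℂ
      = ∑ y ∈ s, ∑ x ∈ s, conj (ξ y) * (ξ x * ⟪v y, d x - d o⟫_ℂ) := by
        rw [sum_inner]
        refine Finset.sum_congr rfl fun y _ => ?_
        rw [inner_smul_left, inner_sum, Finset.mul_sum]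
        refine Finset.sum_congr rfl fun x _ => ?_
        rw [inner_smul_right]
    _ = ∑ y ∈ s, ∑ x ∈ s, conj (ξ y) * (ξ x * ((if y = x then (1:ℂ) else 0) + 1)) := by
        refine Finset.sum_congr rfl fun y hy => Finset.sum_congr rfl fun x hx => ?_
        rw [key x hx y hy]
    _ = (∑ y ∈ s, ∑ x ∈ s, conj (ξ y) * (ξ x * (if y = x then (1:ℂ) else 0)))
        + ∑ y ∈ s, ∑ x ∈ s, conj (ξ y) * ξ x := by
        rw [← Finset.sum_add_distrib]
        refine Finset.sum_congr rfl fun y _ => ?_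
        rw [← Finset.sum_add_distrib]
        refine Finset.sum_congr rfl fun x _ => ?_
        ring
    _ = (∑ y ∈ s, conj (ξ y) * ξ y) + (conj (∑ y ∈ s, ξ y)) * (∑ x ∈ s, ξ x) := by
        congr 1
        · refine Finset.sum_congr rfl fun y hy => ?_
          simp only [mul_ite, mul_zero, mul_one]
          rw [Finset.sum_ite_eq s y (fun x => conj (ξ y) * ξ x)]
          simp [hy]
        · rw [map_sum, Finset.sum_mul]
          refine Finset.sum_congr rfl fun y _ => ?_
          rw [Finset.mul_sum]
    _ = ∑ x ∈ s, (‖ξ x‖ ^ 2 : ℂ) := by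
        rw [hξ]
        simp only [map_zero, zero_mul, mul_zero, add_zero]
        refine Finset.sum_congr rfl fun y _ => ?_
        rw [RCLike.conj_mul]
        norm_cast
end

section
/- The graph Laplacian Δ restricted to the dense domain D_E = span{v_x : x ∈ V'} in the energy Hilbert space is Hermitian (symmetric) and nonnegative: ⟨Δu, v⟩_{H_E} = ⟨u, Δv⟩_{H_E} and ⟨u, Δu⟩_{H_E} ≥ 0 for all u, v ∈ D_E. -/
open scoped InnerProductSpace ComplexConjugate

namespace Network

variable {V : Type*} (N : Network V)

attribute [local instance] Classical.propDecidable

end Network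

attribute [local instance] Classical.propDecidable

/-- The graph Laplacian on the dense domain
`D_E = span{v_x : x ∈ V'}` (where `Δ v_x = δ_x - δ_o`) is Hermitian and nonnegative:
`⟨Δu, w⟩ = ⟨u, Δw⟩` and `⟨u, Δu⟩ ≥ 0`. -/
theorem laplacian_hermitian_nonneg_on_DE
    {V : Type*} [Countable V] (N : Network V)
    {H : Type*} [NormedAddCommGroup H] [InnerProductSpace ℂ H] [CompleteSpace H]
    (S : EnergySpace N H) (o : V) (v d : V → H)
    (hv : ∀ x : V, ∀ u : H, ⟪v x, u⟫_ℂ = S.rep u x - S.rep u o)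
    (hd : ∀ z : V, ∀ a b : V, S.rep (d z) a - S.rep (d z) b =
      (if a = z then (1 : ℂ) else 0) - (if b = z then (1 : ℂ) else 0))
    (s t : Finset V) (hs : ∀ x ∈ s, x ≠ o) (ht : ∀ x ∈ t, x ≠ o)
    (ξ η : V → ℂ) (hξ : ∑ x ∈ s, ξ x = 0) (hη : ∑ x ∈ t, η x = 0) :
    ⟪∑ x ∈ s, ξ x • (d x - d o), ∑ y ∈ t, η y • v y⟫_ℂ =
        ⟪∑ x ∈ s, ξ x • v x, ∑ y ∈ t, η y • (d y - d o)⟫_ℂ ∧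
    0 ≤ (⟪∑ x ∈ s, ξ x • v x, ∑ x ∈ s, ξ x • (d x - d o)⟫_ℂ).re := by
 classical
  -- inner product of a dipole with a delta difference
  have key : ∀ (a z : V), z ≠ o →
      ⟪v a, d z - d o⟫_ℂ =
        (if a = z then (1 : ℂ) else 0) + 1 - (if a = o then (1 : ℂ) else 0) := by
    intro a z hz
    rw [inner_sub_right, hv, hv]
    have h1 := hd z a o
    have h2 := hd o a o
    have h3 : (if o = z then (1 : ℂ) else 0) = 0 := if_neg fun h => hz h.symm
    rw [h1, h2, h3, if_pos rfl]
    ring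
  -- inner product of a dipole with a finite combination of delta differences
  have inner_v_sum : ∀ (a : Finset V) (ζ : V → ℂ), (∀ y ∈ a, y ≠ o) →
      (∑ y ∈ a, ζ y = 0) → ∀ x : V,
      ⟪v x, ∑ y ∈ a, ζ y • (d y - d o)⟫_ℂ = if x ∈ a then ζ x else 0 := by
    intro a ζ ha hz x
    rw [inner_sum]
    simp only [inner_smul_right]
    have hcongr : ∀ y ∈ a, ζ y * ⟪v x, d y - d o⟫_ℂ =
        (if x = y then ζ y else 0) + ζ y * (1 - (if x = o then (1 : ℂ) else 0)) := by
      intro y hy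
      rw [key x y (ha y hy)]
      by_cases h : x = y <;> simp [h] <;> ring
    rw [Finset.sum_congr rfl hcongr, Finset.sum_add_distrib, ← Finset.sum_mul, hz,
      zero_mul, add_zero, Finset.sum_ite_eq]
  have hL : ⟪∑ x ∈ s, ξ x • (d x - d o), ∑ y ∈ t, η y • v y⟫_ℂ =
      ∑ y ∈ t, η y * conj (if y ∈ s then ξ y else 0) := by
    rw [inner_sum]
    refine Finset.sum_congr rfl fun y hy => ?_
    rw [inner_smul_right, ← inner_conj_symm, inner_v_sum s ξ hs hξ y]
  have hR : ∀ (a : Finset V) (ζ : V → ℂ), (∀ y ∈ a, y ≠ o) → (∑ y ∈ a, ζ y = 0) →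
      ⟪∑ x ∈ s, ξ x • v x, ∑ y ∈ a, ζ y • (d y - d o)⟫_ℂ =
      ∑ x ∈ s, conj (ξ x) * (if x ∈ a then ζ x else 0) := by
    intro a ζ ha hz
    rw [sum_inner]
    refine Finset.sum_congr rfl fun x hx => ?_
    rw [inner_smul_left, inner_v_sum a ζ ha hz x]
  constructor
  · rw [hL, hR t η ht hη]
    have e1 : ∑ y ∈ t, η y * conj (if y ∈ s then ξ y else 0)
        = ∑ y ∈ t, (if y ∈ s then conj (ξ y) * η y else 0) := by
      refine Finset.sum_congr rfl fun y hy => ?_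
      by_cases h : y ∈ s <;> simp [h] <;> ring
    have e2 : ∑ x ∈ s, conj (ξ x) * (if x ∈ t then η x else 0)
        = ∑ x ∈ s, (if x ∈ t then conj (ξ x) * η x else 0) := by
      refine Finset.sum_congr rfl fun x hx => ?_
      by_cases h : x ∈ t <;> simp [h]
    rw [e1, e2, Finset.sum_ite_mem, Finset.sum_ite_mem, Finset.inter_comm]
  · rw [hR s ξ hs hξ]
    have : ∑ x ∈ s, conj (ξ x) * (if x ∈ s then ξ x else 0)
        = ∑ x ∈ s, (Complex.normSq (ξ x) : ℂ) := by
      refine Finset.sum_congr rfl fun x hx => ?_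
      rw [if_pos hx, Complex.normSq_eq_conj_mul_self]
    rw [this]
    simp only [Complex.re_sum, Complex.ofReal_re]
    exact Finset.sum_nonneg fun x _ => Complex.normSq_nonneg _
end
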